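/- arXiv:1506.04190 — 3 statements merged into one kernel-verified Lean document; each statement's English description precedes it below -/
import Mathlib

section
/- Let m be a positive integer, let ρ be a continuous probability density on ℝ^m that is strictly positive everywhere, and let f : ℝ^m → ℝ be continuously differentiable with ∇f square-integrable with respect to ρ. Let C = ∫ ∇f ∇fᵀ ρ dx and suppose w ∈ ℝ^m satisfies wᵀ C w = 0. Then ∇f(x)ᵀ w = 0 for every x ∈ ℝ^m, and consequently f(x + t w) = f(x) for every x ∈ ℝ^m and every t ∈ ℝ; that is, f is constant along the direction w. -/
open MeasureTheory Matrix

lemma abs_apply_le_norm_euc {m : ℕ} (x : EuclideanSpace ℝ (Fin m)) (i : Fin m) :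
    |x i| ≤ ‖x‖ := by
  rw [EuclideanSpace.norm_eq]
  have : |x i| = Real.sqrt (x i ^ 2) := by
    rw [Real.sqrt_sq_eq_abs]
  rw [this]
  apply Real.sqrt_le_sqrt
  exact Finset.single_le_sum (f := fun j => x j ^ 2) (fun j _ => sq_nonneg _)
    (Finset.mem_univ i) |>.trans_eq (by simp [sq_abs])

/-- For a continuous, everywhere-positive probability density `ρ` and a
continuously differentiable `f` with square-integrable gradient, if `wᵀ C w = 0` for
`C = ∫ ∇f ∇fᵀ ρ dx`, then `∇f(x)ᵀ w = 0` everywhere and `f` is constant along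
direction `w`. -/
theorem active_subspace_null_direction_constant
    (m : ℕ) (hm : 0 < m)
    (ρ : EuclideanSpace ℝ (Fin m) → ℝ)
    (hρ_cont : Continuous ρ)
    (hρ_pos : ∀ x, 0 < ρ x)
    (hρ_prob : ∫ x, ρ x = 1)
    (f : EuclideanSpace ℝ (Fin m) → ℝ)
    (hf : ContDiff ℝ 1 f)
    (hgrad_sq : Integrable (fun x => ‖gradient f x‖ ^ 2)
      (volume.withDensity (fun x => ENNReal.ofReal (ρ x))))
    (C : Matrix (Fin m) (Fin m) ℝ)
    (hC : ∀ i j, C i j = ∫ x, gradient f x i * gradient f x j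
      ∂(volume.withDensity (fun x => ENNReal.ofReal (ρ x))))
    (w : EuclideanSpace ℝ (Fin m))
    (h_null : (fun i => w i) ⬝ᵥ C.mulVec (fun i => w i) = 0) :
    (∀ x, ∑ i, gradient f x i * w i = 0) ∧
    (∀ (x : EuclideanSpace ℝ (Fin m)) (t : ℝ), f (x + t • w) = f x) := by
  classical
  set μ := volume.withDensity (fun x => ENNReal.ofReal (ρ x)) with hμ
  have hf_diff : Differentiable ℝ f := hf.differentiable one_ne_zero
  have hgrad_cont : Continuous (fun x => gradient f x) := by
    have h1 : Continuous (fderiv ℝ f) := hf.continuous_fderiv one_ne_zero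
    exact (InnerProductSpace.toDual ℝ _).symm.continuous.comp h1
  have hcoord : ∀ i : Fin m, Continuous (fun x => gradient f x i) := fun i =>
    (EuclideanSpace.proj i).continuous.comp hgrad_cont
  set g : EuclideanSpace ℝ (Fin m) → ℝ := fun x => ∑ i, gradient f x i * w i with hg
  have hg_cont : Continuous g := by
    apply continuous_finset_sum
    intro i _
    exact (hcoord i).mul continuous_const
  -- integrability of products of gradient coordinates
  have hij : ∀ i j : Fin m,
      Integrable (fun x => gradient f x i * gradient f x j) μ := by
    intro i j
    refine hgrad_sq.mono (((hcoord i).mul (hcoord j)).aestronglyMeasurable)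
      (Filter.Eventually.of_forall fun x => ?_)
    have h1 := abs_apply_le_norm_euc (gradient f x) i
    have h2 := abs_apply_le_norm_euc (gradient f x) j
    have h3 : |gradient f x i * gradient f x j| ≤ ‖gradient f x‖ ^ 2 := by
      rw [abs_mul, sq]
      exact mul_le_mul h1 h2 (abs_nonneg _) (norm_nonneg _)
    calc ‖gradient f x i * gradient f x j‖ = |gradient f x i * gradient f x j| := rfl
      _ ≤ ‖gradient f x‖ ^ 2 := h3
      _ ≤ ‖(‖gradient f x‖ ^ 2)‖ := le_abs_self _
  -- ∫ g² = wᵀ C w = 0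
  have hg2_int : Integrable (fun x => g x ^ 2) μ := by
    have : (fun x => g x ^ 2) =
        fun x => ∑ i, ∑ j, w i * w j * (gradient f x i * gradient f x j) := by
      funext x
      rw [hg]
      simp only [sq, Finset.sum_mul_sum]
      apply Finset.sum_congr rfl; intro i _
      apply Finset.sum_congr rfl; intro j _
      ring
    rw [this]
    exact integrable_finset_sum _ fun i _ =>
      integrable_finset_sum _ fun j _ => ((hij i j).const_mul _)
  have key : ∫ x, g x ^ 2 ∂μ = 0 := by
    have expand : ∀ x, g x ^ 2 =
        ∑ i, ∑ j, w i * w j * (gradient f x i * gradient f x j) := by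
      intro x
      rw [hg]
      simp only [sq, Finset.sum_mul_sum]
      apply Finset.sum_congr rfl; intro i _
      apply Finset.sum_congr rfl; intro j _
      ring
    calc ∫ x, g x ^ 2 ∂μ
        = ∫ x, ∑ i, ∑ j, w i * w j * (gradient f x i * gradient f x j) ∂μ := by
          simp only [expand]
      _ = ∑ i, ∑ j, ∫ x, w i * w j * (gradient f x i * gradient f x j) ∂μ := by
          rw [integral_finset_sum _ fun i _ =>
            integrable_finset_sum _ fun j _ => ((hij i j).const_mul _)]
          exact Finset.sum_congr rfl fun i _ =>
            integral_finset_sum _ fun j _ => ((hij i j).const_mul _)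
      _ = ∑ i, ∑ j, w i * w j * C i j := by
          apply Finset.sum_congr rfl; intro i _
          apply Finset.sum_congr rfl; intro j _
          rw [integral_const_mul, hC i j]
      _ = (fun i => w i) ⬝ᵥ C.mulVec (fun i => w i) := by
          simp only [dotProduct, mulVec, Finset.mul_sum]
          apply Finset.sum_congr rfl; intro i _
          apply Finset.sum_congr rfl; intro j _
          ring
      _ = 0 := h_null
  have hae : (fun x => g x ^ 2) =ᵐ[μ] 0 :=
    (integral_eq_zero_iff_of_nonneg (fun x => sq_nonneg (g x)) hg2_int).mp key
  have hmeas : Measurable fun x => ENNReal.ofReal (ρ x) :=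
    ENNReal.measurable_ofReal.comp hρ_cont.measurable
  have hae_vol : (fun x => g x ^ 2) =ᵐ[(volume : Measure (EuclideanSpace ℝ (Fin m)))] 0 := by
    have := (ae_withDensity_iff hmeas).mp hae
    filter_upwards [this] with x hx
    exact hx (by simp [ENNReal.ofReal_eq_zero, not_le.mpr (hρ_pos x)])
  have hzero : ∀ x, g x = 0 := by
    have heq : (fun x => g x ^ 2) = 0 :=
      (Continuous.ae_eq_iff_eq volume (hg_cont.pow 2) continuous_const).mp hae_vol
    intro x
    have := congrFun heq x
    simpa [pow_eq_zero_iff] using this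
  refine ⟨hzero, ?_⟩
  intro x t
  -- f is constant along direction w
  set F : ℝ → ℝ := fun s => f (x + s • w) with hF
  have hderiv : ∀ s : ℝ, HasDerivAt F 0 s := by
    intro s
    have h1 : HasDerivAt (fun s : ℝ => x + s • w) w s := by
      simpa using ((hasDerivAt_id s).smul_const w).const_add x
    have h2 : HasFDerivAt f (fderiv ℝ f (x + s • w)) (x + s • w) :=
      (hf_diff _).hasFDerivAt
    have h3 : HasDerivAt F (fderiv ℝ f (x + s • w) w) s := h2.comp_hasDerivAt s h1
    have h4 : fderiv ℝ f (x + s • w) w = g (x + s • w) := by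
      have : fderiv ℝ f (x + s • w) w
          = @inner ℝ _ _ (gradient f (x + s • w)) w := by
        rw [gradient]
        rw [InnerProductSpace.toDual_symm_apply]
      rw [this, hg]
      rw [PiLp.inner_apply]
      exact Finset.sum_congr rfl fun i _ => by simp only [RCLike.inner_apply, conj_trivial]; ring
    rw [h4, hzero] at h3
    exact h3
  have hFdiff : Differentiable ℝ F := fun s => (hderiv s).differentiableAt
  have hFderiv : ∀ s, deriv F s = 0 := fun s => (hderiv s).deriv
  have := is_const_of_deriv_eq_zero hFdiff hFderiv t 0
  simpa [hF] using this
end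

section
/- Let m be a positive integer, let ρ be a continuous probability density on ℝ^m that is strictly positive everywhere, and let f : ℝ^m → ℝ be continuously differentiable with ∇f square-integrable with respect to ρ. Let C = ∫ ∇f ∇fᵀ ρ dx, let n < m, and let W₁ ∈ ℝ^{m×n} and W₂ ∈ ℝ^{m×(m−n)} be such that the concatenated matrix W = [W₁ W₂] is orthogonal and C W₂ = 0. Then f(x) = f(W₁ W₁ᵀ x) for every x ∈ ℝ^m; in particular, there exists g : ℝⁿ → ℝ (namely g(y) = f(W₁ y)) such that f(x) = g(W₁ᵀ x) for all x ∈ ℝ^m. -/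
open MeasureTheory Matrix

private lemma coord_le_norm' {m : ℕ} (x : EuclideanSpace ℝ (Fin m)) (i : Fin m) :
    ‖x i‖ ≤ ‖x‖ := by
  rw [EuclideanSpace.norm_eq, Real.le_sqrt (norm_nonneg _) (by positivity)]
  exact Finset.single_le_sum (f := fun j => ‖x j‖ ^ 2) (fun j _ => sq_nonneg _)
    (Finset.mem_univ i)

/-- continuous nonneg function with zero integral wrt positive continuous density is zero -/
private lemma zero_of_integral_zero {m : ℕ}
    (ρ : EuclideanSpace ℝ (Fin m) → ℝ) (hρ_cont : Continuous ρ) (hρ_pos : ∀ x, 0 < ρ x)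
    (h : EuclideanSpace ℝ (Fin m) → ℝ) (hcont : Continuous h) (hnn : 0 ≤ h)
    (hint : Integrable h (volume.withDensity (fun x => ENNReal.ofReal (ρ x))))
    (hzero : ∫ x, h x ∂(volume.withDensity (fun x => ENNReal.ofReal (ρ x))) = 0) :
    h = 0 := by
  set μ := volume.withDensity (fun x => ENNReal.ofReal (ρ x)) with hμdef
  have hae : h =ᵐ[μ] 0 := (integral_eq_zero_iff_of_nonneg hnn hint).1 hzero
  set S : Set (EuclideanSpace ℝ (Fin m)) := {x | h x ≠ 0} with hSdef
  have hSopen : IsOpen S := isOpen_ne_fun hcont continuous_const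
  have hμS : μ S = 0 := by
    have := hae
    rw [Filter.EventuallyEq, ae_iff] at this
    simpa [hSdef] using this
  have hvolS : volume S = 0 := by
    rw [hμdef, withDensity_apply _ hSopen.measurableSet] at hμS
    have hmeas : Measurable (fun x => ENNReal.ofReal (ρ x)) :=
      hρ_cont.measurable.ennreal_ofReal
    rw [setLIntegral_eq_zero_iff hSopen.measurableSet hmeas] at hμS
    have h2 : ∀ᵐ x ∂(volume : Measure (EuclideanSpace ℝ (Fin m))), x ∉ S := by
      filter_upwards [hμS] with x hx
      intro hxS
      exact absurd (hx hxS) (by simp [ENNReal.ofReal_eq_zero, not_le, hρ_pos x])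
    rw [ae_iff] at h2
    simpa using h2
  have : h =ᵐ[volume] 0 := by
    rw [Filter.EventuallyEq, ae_iff]
    simpa [hSdef] using hvolS
  exact (Continuous.ae_eq_iff_eq volume hcont continuous_const).1 this

private lemma rows_orth {m n : ℕ} (hn : n < m)
    (W₁ : Matrix (Fin m) (Fin n) ℝ) (W₂ : Matrix (Fin m) (Fin (m - n)) ℝ)
    (h_orth : (Matrix.fromCols W₁ W₂)ᵀ * Matrix.fromCols W₁ W₂ = 1) :
    W₁ * W₁ᵀ + W₂ * W₂ᵀ = 1 := by
  set W := Matrix.fromCols W₁ W₂ with hW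
  have e : (Fin n ⊕ Fin (m - n)) ≃ Fin m := finSumFinEquiv.trans (finCongr (by omega))
  have h1 : (Wᵀ.submatrix ⇑e.symm id) * (W.submatrix id ⇑e.symm) = 1 := by
    have := Matrix.submatrix_mul_equiv Wᵀ W ⇑e.symm (Equiv.refl _) ⇑e.symm
    simp only [Equiv.coe_refl] at this
    rw [this, h_orth, Matrix.submatrix_one_equiv]
  have h2 : (W.submatrix id ⇑e.symm) * (Wᵀ.submatrix ⇑e.symm id) = 1 :=
    mul_eq_one_comm.mp h1
  have h3 : W * Wᵀ = 1 := by
    have := Matrix.submatrix_mul_equiv W Wᵀ id e.symm id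
    rw [h2] at this
    rw [Matrix.submatrix_id_id] at this
    exact this.symm
  rw [← Matrix.fromCols_mul_fromRows W₁ W₂ W₁ᵀ W₂ᵀ, ← Matrix.transpose_fromCols, h3]

/-- If `W = [W₁ W₂]` is orthogonal and `C W₂ = 0` for
`C = ∫ ∇f ∇fᵀ ρ dx` (with `ρ` a continuous everywhere-positive probability density and
`f` continuously differentiable with square-integrable gradient), then
`f(x) = f(W₁ W₁ᵀ x)` for all `x`; in particular `f(x) = g(W₁ᵀ x)` with `g(y) = f(W₁ y)`. -/
theorem active_subspace_ridge_structure
    (m n : ℕ) (hm : 0 < m) (hn : n < m)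
    (ρ : EuclideanSpace ℝ (Fin m) → ℝ)
    (hρ_cont : Continuous ρ)
    (hρ_pos : ∀ x, 0 < ρ x)
    (hρ_prob : ∫ x, ρ x = 1)
    (f : EuclideanSpace ℝ (Fin m) → ℝ)
    (hf : ContDiff ℝ 1 f)
    (hgrad_sq : Integrable (fun x => ‖gradient f x‖ ^ 2)
      (volume.withDensity (fun x => ENNReal.ofReal (ρ x))))
    (C : Matrix (Fin m) (Fin m) ℝ)
    (hC : ∀ i j, C i j = ∫ x, gradient f x i * gradient f x j
      ∂(volume.withDensity (fun x => ENNReal.ofReal (ρ x))))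
    (W₁ : Matrix (Fin m) (Fin n) ℝ)
    (W₂ : Matrix (Fin m) (Fin (m - n)) ℝ)
    (h_orth : (Matrix.fromCols W₁ W₂)ᵀ * Matrix.fromCols W₁ W₂ = 1)
    (h_null : C * W₂ = 0) :
    (∀ x : EuclideanSpace ℝ (Fin m),
      f x = f ((EuclideanSpace.equiv (Fin m) ℝ).symm
        ((W₁ * W₁ᵀ).mulVec (fun i => x i)))) ∧
    ∃ g : EuclideanSpace ℝ (Fin n) → ℝ,
      (∀ y : EuclideanSpace ℝ (Fin n),
        g y = f ((EuclideanSpace.equiv (Fin m) ℝ).symm (W₁.mulVec (fun i => y i)))) ∧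
      ∀ x : EuclideanSpace ℝ (Fin m),
        f x = g ((EuclideanSpace.equiv (Fin n) ℝ).symm (W₁ᵀ.mulVec (fun i => x i))) := by
  set μ := volume.withDensity (fun x => ENNReal.ofReal (ρ x)) with hμdef
  set g := fun x => gradient f x with hgdef
  -- continuity of gradient
  have hg_cont : Continuous g := by
    have h1 : Continuous (fderiv ℝ f) := hf.continuous_fderiv one_ne_zero
    exact (InnerProductSpace.toDual ℝ _).symm.continuous.comp h1
  have hgi_cont : ∀ i, Continuous (fun x => g x i) := fun i =>
    (EuclideanSpace.proj i).continuous.comp hg_cont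
  -- integrability of products of gradient components
  have h_int_prod : ∀ i j, Integrable (fun x => g x i * g x j) μ := by
    intro i j
    refine hgrad_sq.mono (((hgi_cont i).mul (hgi_cont j)).aestronglyMeasurable) ?_
    filter_upwards with x
    have hi := coord_le_norm' (g x) i
    have hj := coord_le_norm' (g x) j
    calc ‖g x i * g x j‖ = ‖g x i‖ * ‖g x j‖ := norm_mul _ _
      _ ≤ ‖g x‖ * ‖g x‖ := by
          exact mul_le_mul hi hj (norm_nonneg _) (norm_nonneg _)
      _ ≤ ‖‖gradient f x‖ ^ 2‖ := by
          rw [← sq]; exact le_abs_self _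
  -- each column of W₂ is orthogonal to the gradient everywhere
  have col : ∀ (k : Fin (m - n)) (x : EuclideanSpace ℝ (Fin m)),
      ∑ i, W₂ i k * g x i = 0 := by
    intro k
    set v : Fin m → ℝ := fun i => W₂ i k with hv
    have hCv : ∀ i, ∑ j, C i j * v j = 0 := by
      intro i
      have := congrFun (congrFun h_null i) k
      simpa [Matrix.mul_apply] using this
    set h : EuclideanSpace ℝ (Fin m) → ℝ := fun x => (∑ i, v i * g x i) ^ 2 with hh
    have hexp : ∀ x, h x = ∑ i, ∑ j, (v i * v j) * (g x i * g x j) := by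
      intro x
      rw [hh]
      simp only [sq, Finset.sum_mul_sum]
      apply Finset.sum_congr rfl; intro i _
      apply Finset.sum_congr rfl; intro j _
      ring
    have h_int_term : ∀ (i j : Fin m),
        Integrable (fun x => (v i * v j) * (g x i * g x j)) μ :=
      fun i j => (h_int_prod i j).const_mul _
    have h_int : Integrable h μ := by
      have : Integrable (fun x => ∑ i, ∑ j, (v i * v j) * (g x i * g x j)) μ :=
        integrable_finset_sum _ (fun i _ => integrable_finset_sum _ (fun j _ => h_int_term i j))
      exact this.congr (by filter_upwards with x using (hexp x).symm)
    have h_integral : ∫ x, h x ∂μ = 0 := by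
      have e1 : ∫ x, h x ∂μ = ∑ i, ∑ j, (v i * v j) * C i j := by
        rw [integral_congr_ae (Filter.Eventually.of_forall hexp)]
        rw [integral_finset_sum _ (fun i _ =>
          integrable_finset_sum _ (fun j _ => h_int_term i j))]
        apply Finset.sum_congr rfl; intro i _
        rw [integral_finset_sum _ (fun j _ => h_int_term i j)]
        apply Finset.sum_congr rfl; intro j _
        rw [integral_const_mul, ← hC i j]
      rw [e1]
      have : ∀ i, ∑ j, (v i * v j) * C i j = v i * (∑ j, C i j * v j) := by
        intro i
        rw [Finset.mul_sum]
        apply Finset.sum_congr rfl; intro j _; ring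
      calc ∑ i, ∑ j, (v i * v j) * C i j
          = ∑ i, v i * (∑ j, C i j * v j) := Finset.sum_congr rfl fun i _ => this i
        _ = 0 := by simp [hCv]
    have hzero : h = 0 :=
      zero_of_integral_zero ρ hρ_cont hρ_pos h
        (by exact (continuous_finset_sum _ (fun i _ => continuous_const.mul (hgi_cont i))).pow 2) (fun x => sq_nonneg _) h_int h_integral
    intro x
    have := congrFun hzero x
    simp only [hh, Pi.zero_apply] at this
    have := pow_eq_zero_iff (n := 2) (by norm_num) |>.mp this
    simpa [hv, mul_comm] using this
  -- directional derivative vanishes along range of W₂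
  have key : ∀ (u : Fin (m - n) → ℝ) (y : EuclideanSpace ℝ (Fin m)),
      ∑ i, W₂.mulVec u i * g y i = 0 := by
    intro u y
    have : ∑ i, W₂.mulVec u i * g y i
        = ∑ k, u k * (∑ i, W₂ i k * g y i) := by
      simp only [Matrix.mulVec, dotProduct, Finset.sum_mul, Finset.mul_sum]
      rw [Finset.sum_comm]
      apply Finset.sum_congr rfl; intro k _
      apply Finset.sum_congr rfl; intro i _
      ring
    rw [this]
    simp [col]
  have hWWT : W₁ * W₁ᵀ + W₂ * W₂ᵀ = 1 := rows_orth hn W₁ W₂ h_orth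
  -- main pointwise claim
  have main : ∀ x : EuclideanSpace ℝ (Fin m),
      f x = f ((EuclideanSpace.equiv (Fin m) ℝ).symm
        ((W₁ * W₁ᵀ).mulVec (fun i => x i))) := by
    intro x
    set x' : Fin m → ℝ := fun i => x i with hx'
    set a : EuclideanSpace ℝ (Fin m) :=
      (EuclideanSpace.equiv (Fin m) ℝ).symm ((W₁ * W₁ᵀ).mulVec x') with ha
    set b : EuclideanSpace ℝ (Fin m) :=
      (EuclideanSpace.equiv (Fin m) ℝ).symm ((W₂ * W₂ᵀ).mulVec x') with hb
    have hab : a + b = x := by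
      apply PiLp.ext
      intro i
      have : (W₁ * W₁ᵀ).mulVec x' i + (W₂ * W₂ᵀ).mulVec x' i = x' i := by
        rw [← Pi.add_apply, ← Matrix.add_mulVec, hWWT, Matrix.one_mulVec]
      simpa [ha, hb] using this
    -- derivative of f in direction b is zero everywhere
    have hdir : ∀ y : EuclideanSpace ℝ (Fin m), (fderiv ℝ f y) b = 0 := by
      intro y
      have h1 : (fderiv ℝ f y) b = inner ℝ (gradient f y) b :=
        (InnerProductSpace.toDual_symm_apply (𝕜 := ℝ)).symm
      rw [h1]
      rw [PiLp.inner_apply]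
      have hb2 : ∀ i, b i = W₂.mulVec (W₂ᵀ.mulVec x') i := by
        intro i
        simp [hb, Matrix.mulVec_mulVec]
      calc (∑ i, inner ℝ (gradient f y i) (b i) : ℝ)
          = ∑ i, W₂.mulVec (W₂ᵀ.mulVec x') i * g y i := by
            apply Finset.sum_congr rfl; intro i _
            rw [RCLike.inner_apply, hb2 i]
            simp only [starRingEnd_apply, star_trivial]
            ring
          _ = 0 := key _ y
    have hfd : Differentiable ℝ f := hf.differentiable one_ne_zero
    set φ : ℝ → ℝ := fun t => f (a + t • b) with hφ
    have hφd : ∀ t : ℝ, HasDerivAt φ 0 t := by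
      intro t
      have hc : HasDerivAt (fun t : ℝ => a + t • b) b t := by
        simpa using ((hasDerivAt_id t).smul_const b).const_add a
      have := (hfd (a + t • b)).hasFDerivAt.comp_hasDerivAt t hc
      rw [hdir] at this
      exact this
    have hconst : φ 1 = φ 0 :=
      is_const_of_deriv_eq_zero (fun t => (hφd t).differentiableAt)
        (fun t => (hφd t).deriv) 1 0
    have h10 : φ 1 = f x := by rw [hφ]; simp [hab]
    have h00 : φ 0 = f a := by rw [hφ]; simp
    rw [← h10, hconst, h00]
  refine ⟨main, fun y => f ((EuclideanSpace.equiv (Fin m) ℝ).symm (W₁.mulVec (fun i => y i))),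
    fun y => rfl, ?_⟩
  intro x
  rw [main x]
  congr 1
  apply PiLp.ext
  intro i
  show (W₁ * W₁ᵀ).mulVec (fun i => x i) i = W₁.mulVec _ i
  rw [← Matrix.mulVec_mulVec]
  rfl
end

section
/- Let m be a positive integer, let H ∈ ℝ^{m×m} be symmetric, let f(x) = ½ xᵀ H x, and let ρ be the uniform probability density on [−1,1]^m. Let C = ∫ ∇f ∇fᵀ ρ dx. If v ∈ ℝ^m is an eigenvector of H with eigenvalue μ, then v is an eigenvector of C with eigenvalue μ²/3. In particular, the eigenvectors of C coincide with the eigenvectors of H, and the eigenvalues of C are the eigenvalues of H squared and divided by 3. -/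
open MeasureTheory Matrix

/-- For the quadratic `f(x) = ½ xᵀ H x` with `H` symmetric and `ρ` the
uniform probability density on `[-1,1]^m`, if `v` is an eigenvector of `H` with
eigenvalue `μ`, then `v` is an eigenvector of `C = ∫ ∇f ∇fᵀ ρ dx` with eigenvalue
`μ²/3`. -/
theorem active_subspace_quadratic_eigenpairs
    (m : ℕ) (hm : 0 < m)
    (H : Matrix (Fin m) (Fin m) ℝ) (hH : Hᵀ = H)
    (f : EuclideanSpace ℝ (Fin m) → ℝ)
    (hf : ∀ x, f x = (1 / 2) * ∑ i, ∑ j, x i * (H i j * x j))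
    (ρ : EuclideanSpace ℝ (Fin m) → ℝ)
    (hρ : ρ = Set.indicator {x : EuclideanSpace ℝ (Fin m) | ∀ i, x i ∈ Set.Icc (-1 : ℝ) 1}
      (fun _ => (1 / 2 : ℝ) ^ m))
    (C : Matrix (Fin m) (Fin m) ℝ)
    (hC : ∀ i j, C i j = ∫ x, gradient f x i * gradient f x j
      ∂(volume.withDensity (fun x => ENNReal.ofReal (ρ x))))
    (v : Fin m → ℝ) (μ : ℝ)
    (hv : v ≠ 0)
    (h_eig : H.mulVec v = μ • v) :
    C.mulVec v = (μ ^ 2 / 3) • v := by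
  classical
  have hsym : ∀ a b, H a b = H b a := fun a b => by
    nth_rewrite 1 [← hH]; rw [Matrix.transpose_apply]
  -- Step 1: the gradient is `H x`.
  have hgrad : ∀ (x : EuclideanSpace ℝ (Fin m)) (i : Fin m),
      gradient f x i = H.mulVec (fun k => x k) i := by
    set P : Fin m → EuclideanSpace ℝ (Fin m) →L[ℝ] ℝ :=
      fun i => EuclideanSpace.proj i with hP
    intro x
    have hD : HasFDerivAt f
        ((1/2 : ℝ) • ∑ i : Fin m, ∑ j : Fin m,
          ((x i) • ((H i j) • P j) + (H i j * x j) • P i)) x := by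
      have hf' : f = fun x : EuclideanSpace ℝ (Fin m) =>
          (1/2 : ℝ) * ∑ i, ∑ j, x i * (H i j * x j) := funext hf
      rw [hf']
      apply HasFDerivAt.const_mul
      apply HasFDerivAt.fun_sum; intro i _
      apply HasFDerivAt.fun_sum; intro j _
      exact ((P i).hasFDerivAt).mul (((P j).hasFDerivAt).const_mul (H i j))
    have heq : ((1/2 : ℝ) • ∑ i : Fin m, ∑ j : Fin m,
          ((x i) • ((H i j) • P j) + (H i j * x j) • P i))
        = (InnerProductSpace.toDual ℝ (EuclideanSpace ℝ (Fin m)))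
            ((WithLp.equiv 2 (Fin m → ℝ)).symm (H.mulVec (fun k => x k))) := by
      refine ContinuousLinearMap.ext fun h => ?_
      simp only [ContinuousLinearMap.smul_apply, ContinuousLinearMap.sum_apply,
        ContinuousLinearMap.add_apply, InnerProductSpace.toDual_apply_apply, PiLp.inner_apply,
        RCLike.inner_apply, starRingEnd_apply, star_trivial, hP, PiLp.proj_apply,
        WithLp.equiv_symm_apply, PiLp.toLp_apply, Matrix.mulVec, dotProduct, smul_eq_mul]
      have swap : ∑ i : Fin m, ∑ j : Fin m, x i * (H i j * h j)
          = ∑ i : Fin m, ∑ j : Fin m, H i j * x j * h i := by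
        rw [Finset.sum_comm]
        exact Finset.sum_congr rfl fun i _ => Finset.sum_congr rfl fun j _ => by
          rw [hsym j i]; ring
      calc (1/2 : ℝ) * ∑ i : Fin m, ∑ j : Fin m, (x i * (H i j * h j) + H i j * x j * h i)
          = (1/2 : ℝ) * ((∑ i : Fin m, ∑ j : Fin m, x i * (H i j * h j))
              + ∑ i : Fin m, ∑ j : Fin m, H i j * x j * h i) := by
            rw [← Finset.sum_add_distrib]
            congr 1
            exact Finset.sum_congr rfl fun i _ => Finset.sum_add_distrib
        _ = ∑ i : Fin m, ∑ j : Fin m, H i j * x j * h i := by rw [swap]; ring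
        _ = ∑ i : Fin m, (∑ j : Fin m, H i j * x j) * h i := by
            exact Finset.sum_congr rfl fun i _ => (Finset.sum_mul _ _ _).symm
      exact Finset.sum_congr rfl fun i _ => mul_comm _ _
    have hg : gradient f x = (WithLp.equiv 2 (Fin m → ℝ)).symm (H.mulVec (fun k => x k)) :=
      (hasGradientAt_iff_hasFDerivAt.2 (heq ▸ hD)).gradient
    intro i
    rw [hg]
    rfl
  -- Step 2: moments of the uniform density on the cube.
  have hmono : ∀ k l : Fin m,
      Integrable (fun x : EuclideanSpace ℝ (Fin m) => ρ x * (x k * x l)) volume ∧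
      (∫ x : EuclideanSpace ℝ (Fin m), ρ x * (x k * x l)) = if k = l then (1/3:ℝ) else 0 := by
    intro k l
    set n : Fin m → ℕ := fun i => (if i = k then 1 else 0) + (if i = l then 1 else 0) with hn
    set φ : Fin m → ℝ → ℝ :=
      fun i => Set.indicator (Set.Icc (-1:ℝ) 1) (fun s => (1/2:ℝ) * s ^ n i) with hφ
    have hφint : ∀ i, Integrable (φ i) volume := fun i =>
      ((continuous_const.mul (continuous_pow _)).integrableOn_Icc).integrable_indicator
        measurableSet_Icc
    have hval : ∀ nn : ℕ, (∫ t : ℝ, Set.indicator (Set.Icc (-1:ℝ) 1)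
        (fun s => (1/2:ℝ) * s ^ nn) t) = (1/2) * ((1 - (-1:ℝ)^(nn+1))/(nn+1)) := by
      intro nn
      rw [MeasureTheory.integral_indicator measurableSet_Icc,
        MeasureTheory.integral_Icc_eq_integral_Ioc,
        ← intervalIntegral.integral_of_le (by norm_num : (-1:ℝ) ≤ 1),
        intervalIntegral.integral_const_mul, integral_pow]
      norm_num
    set e := (MeasurableEquiv.toLp 2 (Fin m → ℝ)).symm with he
    have hprod : ∀ y : Fin m → ℝ,
        ρ (e.symm y) * (y k * y l) = ∏ i, φ i (y i) := by
      intro y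
      by_cases hy : ∀ i, y i ∈ Set.Icc (-1:ℝ) 1
      · have hmem : e.symm y ∈ {x : EuclideanSpace ℝ (Fin m) | ∀ i, x i ∈ Set.Icc (-1 : ℝ) 1} := hy
        have hone : ∀ (k : Fin m), (∏ i, y i ^ (if i = k then 1 else 0)) = y k := by
          intro k
          rw [Finset.prod_eq_single k (fun i _ hik => by simp [hik])
            (fun h => absurd (Finset.mem_univ k) h)]
          simp
        rw [hρ, Set.indicator_of_mem hmem]
        calc (1/2:ℝ)^m * (y k * y l)
            = ∏ i, ((1/2:ℝ) * y i ^ n i) := by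
              rw [Finset.prod_mul_distrib, Finset.prod_const, Finset.card_univ, Fintype.card_fin]
              congr 1
              rw [hn]
              simp only [pow_add]
              rw [Finset.prod_mul_distrib, hone k, hone l]
          _ = ∏ i, φ i (y i) := Finset.prod_congr rfl fun i _ => by
              simp only [hφ]
              exact (Set.indicator_of_mem (hy i) (fun s => (1/2:ℝ) * s ^ n i)).symm
      · push_neg at hy
        obtain ⟨i₀, hi₀⟩ := hy
        have h1 : ρ (e.symm y) = 0 := by
          rw [hρ, Set.indicator_of_notMem]
          intro hmem
          exact hi₀ (hmem i₀)
        have h2 : φ i₀ (y i₀) = 0 := Set.indicator_of_notMem hi₀ _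
        rw [h1, Finset.prod_eq_zero (Finset.mem_univ i₀) h2, zero_mul]
    have hmp : MeasurePreserving (⇑e.symm) volume volume :=
      (EuclideanSpace.volume_preserving_symm_measurableEquiv_toLp (Fin m)).symm e
    have hIntPi : Integrable (fun y : Fin m → ℝ => ∏ i, φ i (y i)) volume :=
      Integrable.fintype_prod hφint
    have hcompeq : (fun x : EuclideanSpace ℝ (Fin m) => ρ x * (x k * x l)) ∘ ⇑e.symm
        = fun y : Fin m → ℝ => ∏ i, φ i (y i) := by
      funext y; exact hprod y
    refine ⟨?_, ?_⟩
    · exact (hmp.integrable_comp_emb e.symm.measurableEmbedding).1 (hcompeq ▸ hIntPi)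
    · rw [← hmp.integral_comp e.symm.measurableEmbedding]
      calc (∫ y : Fin m → ℝ, ρ (e.symm y) * ((e.symm y) k * (e.symm y) l))
          = ∫ y : Fin m → ℝ, ∏ i, φ i (y i) :=
            integral_congr_ae (Filter.Eventually.of_forall fun y => hprod y)
        _ = ∏ i, ∫ t : ℝ, φ i t := integral_fintype_prod_eq_prod (f := φ)
        _ = if k = l then (1/3:ℝ) else 0 := by
            by_cases hkl : k = l
            · subst hkl
              simp only [if_pos rfl]
              rw [Finset.prod_eq_single k (fun i _ hik => by
                  simp only [hφ]
                  rw [show n i = 0 by simp [hn, hik], hval 0]; norm_num)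
                (fun h => absurd (Finset.mem_univ k) h)]
              simp only [hφ]
              rw [show n k = 2 by simp [hn], hval 2]; norm_num
            · simp only [if_neg hkl]
              refine Finset.prod_eq_zero (Finset.mem_univ k) ?_
              simp only [hφ]
              rw [show n k = 1 by simp [hn, hkl], hval 1]; norm_num
  -- Step 3: compute the entries of C.
  have hcube_meas : MeasurableSet {x : EuclideanSpace ℝ (Fin m) | ∀ i, x i ∈ Set.Icc (-1:ℝ) 1} := by
    have hrw : {x : EuclideanSpace ℝ (Fin m) | ∀ i, x i ∈ Set.Icc (-1:ℝ) 1}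
        = ⋂ i, (fun x : EuclideanSpace ℝ (Fin m) => x i) ⁻¹' (Set.Icc (-1:ℝ) 1) := by
      ext x; simp
    rw [hrw]
    exact MeasurableSet.iInter fun i =>
      ((EuclideanSpace.proj i).continuous.measurable) measurableSet_Icc
  have hρ_nonneg : ∀ x, 0 ≤ ρ x := by
    intro x; rw [hρ]
    exact Set.indicator_nonneg (fun _ _ => by positivity) x
  have hρ_meas : Measurable ρ := by
    rw [hρ]; exact measurable_const.indicator hcube_meas
  have hCij : ∀ i j, C i j = (1/3 : ℝ) * ∑ k, H i k * H j k := by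
    intro i j
    rw [hC i j]
    have hmeas' : Measurable fun x : EuclideanSpace ℝ (Fin m) => (ρ x).toNNReal :=
      hρ_meas.real_toNNReal
    calc (∫ x, gradient f x i * gradient f x j
          ∂(volume.withDensity fun x => ENNReal.ofReal (ρ x)))
        = ∫ x, ρ x * (gradient f x i * gradient f x j) := by
          rw [show (fun x : EuclideanSpace ℝ (Fin m) => ENNReal.ofReal (ρ x))
              = fun x => ((ρ x).toNNReal : ENNReal) from rfl,
            integral_withDensity_eq_integral_smul hmeas']
          refine integral_congr_ae (Filter.Eventually.of_forall fun x => ?_)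
          dsimp only
          rw [NNReal.smul_def, Real.coe_toNNReal _ (hρ_nonneg x), smul_eq_mul]
      _ = ∫ x, ∑ k, ∑ l, H i k * H j l * (ρ x * (x k * x l)) := by
          refine integral_congr_ae (Filter.Eventually.of_forall fun x => ?_)
          dsimp only
          rw [hgrad x i, hgrad x j]
          simp only [Matrix.mulVec, dotProduct]
          rw [Finset.sum_mul_sum, Finset.mul_sum]
          refine Finset.sum_congr rfl fun k _ => ?_
          rw [Finset.mul_sum]
          exact Finset.sum_congr rfl fun l _ => by ring
      _ = ∑ k, ∑ l, H i k * H j l * (if k = l then (1/3:ℝ) else 0) := by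
          rw [integral_finset_sum _ (fun k _ =>
            integrable_finset_sum _ fun l _ => ((hmono k l).1.const_mul _))]
          refine Finset.sum_congr rfl fun k _ => ?_
          rw [integral_finset_sum _ (fun l _ => ((hmono k l).1.const_mul _))]
          refine Finset.sum_congr rfl fun l _ => ?_
          rw [MeasureTheory.integral_const_mul, (hmono k l).2]
      _ = (1/3 : ℝ) * ∑ k, H i k * H j k := by
          rw [Finset.mul_sum]
          refine Finset.sum_congr rfl fun k _ => ?_
          rw [Finset.sum_eq_single k (fun l _ hlk => by rw [if_neg (Ne.symm hlk), mul_zero])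
            (fun h => absurd (Finset.mem_univ k) h)]
          rw [if_pos rfl]; ring
  -- Step 4: linear algebra.
  have hCeq : C = (1/3 : ℝ) • (H * H) := by
    ext i j
    rw [hCij i j, Matrix.smul_apply, Matrix.mul_apply, smul_eq_mul]
    congr 1
    exact Finset.sum_congr rfl fun k _ => by rw [hsym j k]
  rw [hCeq, Matrix.smul_mulVec, ← Matrix.mulVec_mulVec, h_eig, Matrix.mulVec_smul, h_eig,
    smul_smul, smul_smul]
  congr 1
  ring
end
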